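/- The group PSL₂(ℤ) is isomorphic to the free product ℤ/2 * ℤ/3. -/

import Mathlib

/-- PSL₂(ℤ): the quotient of SL₂(ℤ) by its center {±I}. -/
abbrev PSL2Z : Type :=
  Matrix.SpecialLinearGroup (Fin 2) ℤ ⧸
    Subgroup.center (Matrix.SpecialLinearGroup (Fin 2) ℤ)

open Matrix Matrix.SpecialLinearGroup ModularGroup UpperHalfPlane

local notation "SL2Z" => Matrix.SpecialLinearGroup (Fin 2) ℤ

namespace PSLFree

/-! ### Basic matrices -/

/-- B = [[0,1],[-1,1]], acts as z ↦ 1/(1-z); has order 3 mod center. -/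
def Bmat : SL2Z := ⟨!![0, 1; -1, 1], by norm_num [Matrix.det_fin_two_of]⟩

lemma S_sq : (S : SL2Z) ^ 2 = -1 := by
  ext i j
  rw [Matrix.SpecialLinearGroup.coe_pow]
  fin_cases i <;> fin_cases j <;>
    simp [pow_two, S, Matrix.mul_apply, Fin.sum_univ_two]

lemma B_cube : Bmat ^ 3 = -1 := by
  ext i j
  rw [Matrix.SpecialLinearGroup.coe_pow]
  fin_cases i <;> fin_cases j <;>
    simp [pow_succ, pow_zero, Bmat, Matrix.mul_apply, Fin.sum_univ_two]

lemma B_sq_mul_S : Bmat ^ 2 * S = T := by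
  ext i j
  rw [Matrix.SpecialLinearGroup.coe_mul, Matrix.SpecialLinearGroup.coe_pow]
  fin_cases i <;> fin_cases j <;>
    simp [pow_two, Bmat, S, T, Matrix.mul_apply, Fin.sum_univ_two]

lemma neg_one_mem_center : (-1 : SL2Z) ∈ Subgroup.center SL2Z := by
  rw [Matrix.SpecialLinearGroup.mem_center_iff]
  exact ⟨-1, by norm_num, by ext i j; fin_cases i <;> fin_cases j <;> simp⟩

lemma mem_center_iff' (A : SL2Z) :
    A ∈ Subgroup.center SL2Z ↔ A = 1 ∨ A = -1 := by
  constructor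
  · intro h
    obtain ⟨r, hr, hA⟩ := Matrix.SpecialLinearGroup.mem_center_iff.mp h
    have hr2 : r * r = 1 := by rwa [Fintype.card_fin, sq] at hr
    rcases Int.isUnit_iff.mp (IsUnit.of_mul_eq_one (a := r) r hr2) with rfl | rfl
    · left; ext i j; rw [← hA]; fin_cases i <;> fin_cases j <;> simp
    · right; ext i j; rw [← hA]; fin_cases i <;> fin_cases j <;> simp
  · rintro (rfl | rfl)
    · exact Subgroup.one_mem _
    · exact neg_one_mem_center

/-! ### Generation of SL(2,ℤ) by S and T -/

lemma closure_ST : Subgroup.closure ({S, T} : Set SL2Z) = ⊤ := by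
  rw [eq_top_iff]
  intro A _
  set H := Subgroup.closure ({S, T} : Set SL2Z) with hH
  have hS : S ∈ H := Subgroup.subset_closure (by simp)
  have hT : T ∈ H := Subgroup.subset_closure (by simp)
  have hneg : (-1 : SL2Z) ∈ H := by
    have := Subgroup.pow_mem H hS 2
    rwa [S_sq] at this
  have hTz : ∀ n : ℤ, (T ^ n) ∈ H := fun n => Subgroup.zpow_mem H hT n
  suffices h : ∀ n : ℕ, ∀ A : SL2Z, (A 1 0).natAbs = n → A ∈ H by
    exact h (A 1 0).natAbs A rfl
  intro n
  induction n using Nat.strong_induction_on with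
  | _ n ih =>
    intro A hA
    rcases eq_or_ne (A 1 0) 0 with hc | hc
    · have hdet := A.property
      rw [Matrix.det_fin_two] at hdet
      have hdet' : A 0 0 * A 1 1 = 1 := by
        have := hdet; rw [hc] at this; linarith
      rcases Int.mul_eq_one_iff_eq_one_or_neg_one.mp hdet' with ⟨h1, h2⟩ | ⟨h1, h2⟩
      · have : A = T ^ (A 0 1) := by
          ext i j
          rw [ModularGroup.coe_T_zpow]
          fin_cases i <;> fin_cases j <;> simp [h1, h2, hc]
        rw [this]; exact hTz _
      · have : A = -1 * T ^ (-(A 0 1)) := by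
          ext i j
          rw [Matrix.SpecialLinearGroup.coe_mul, ModularGroup.coe_T_zpow]
          fin_cases i <;> fin_cases j <;>
            simp [Matrix.mul_apply, Fin.sum_univ_two, h1, h2, hc]
        rw [this]; exact H.mul_mem hneg (hTz _)
    · set q : ℤ := A 0 0 / A 1 0 with hq
      set A' : SL2Z := S * (T ^ (-q) * A) with hA'
      have key : A' 1 0 = A 0 0 % A 1 0 := by
        rw [Int.emod_def, ← hq]
        show ((S * (T ^ (-q) * A) : SL2Z) : Matrix (Fin 2) (Fin 2) ℤ) 1 0 = _
        rw [Matrix.SpecialLinearGroup.coe_mul, Matrix.SpecialLinearGroup.coe_mul,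
          ModularGroup.coe_S, ModularGroup.coe_T_zpow]
        simp [Matrix.mul_apply, Fin.sum_univ_two, Matrix.vecMul, Matrix.vecHead,
          Matrix.vecTail, dotProduct]
        ring
      have hlt : (A' 1 0).natAbs < n := by
        rw [key, ← hA]
        rcases lt_or_gt_of_ne hc with h | h
        · have h1 : 0 ≤ A 0 0 % A 1 0 := Int.emod_nonneg _ hc
          have h2 : A 0 0 % A 1 0 < -(A 1 0) := by
            have := Int.emod_lt_of_pos (A 0 0) (b := -(A 1 0)) (by omega)
            rwa [Int.emod_neg] at this
          omega
        · have h1 : 0 ≤ A 0 0 % A 1 0 := Int.emod_nonneg _ hc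
          have h2 : A 0 0 % A 1 0 < A 1 0 := Int.emod_lt_of_pos _ h
          omega
      have hA'mem : A' ∈ H := ih _ hlt A' rfl
      have : A = T ^ q * (S⁻¹ * A') := by
        rw [hA', inv_mul_cancel_left, _root_.zpow_neg, mul_inv_cancel_left]
      rw [this]
      exact H.mul_mem (hTz q) (H.mul_mem (H.inv_mem hS) hA'mem)

/-! ### The action of PSL₂(ℤ) on ℍ -/

lemma neg_one_smul_H (z : ℍ) : ((-1 : SL2Z)) • z = z := by
  ext
  rw [UpperHalfPlane.specialLinearGroup_apply]
  simp

lemma center_acts_trivially :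
    Subgroup.center SL2Z ≤ (MulAction.toPermHom SL2Z ℍ).ker := by
  intro A hA
  rcases (mem_center_iff' A).mp hA with rfl | rfl
  · exact map_one _
  · rw [MonoidHom.mem_ker]
    ext z
    simpa using congrArg UpperHalfPlane.coe (neg_one_smul_H z)

abbrev PSL := SL2Z ⧸ Subgroup.center SL2Z

/-- The action of PSL₂(ℤ) on ℍ, as a permutation representation. -/
noncomputable def pslPerm : PSL →* Equiv.Perm ℍ :=
  QuotientGroup.lift _ (MulAction.toPermHom SL2Z ℍ) center_acts_trivially

noncomputable instance : MulAction PSL ℍ := MulAction.compHom ℍ pslPerm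

lemma psl_smul (A : SL2Z) (z : ℍ) :
    (QuotientGroup.mk A : PSL) • z = A • z := rfl

/-! ### Homomorphisms from cyclic groups -/

/-- A hom from `Multiplicative (ZMod n)` determined by an element of order dividing `n`. -/
def zmodHom (n : ℕ) [NeZero n] {G : Type*} [Group G] (g : G) (h : g ^ n = 1) :
    Multiplicative (ZMod n) →* G where
  toFun x := g ^ (Multiplicative.toAdd x).val
  map_one' := by
    show g ^ (0 : ZMod n).val = 1
    rw [ZMod.val_zero, pow_zero]
  map_mul' x y := by
    show g ^ ((Multiplicative.toAdd x) + (Multiplicative.toAdd y)).val = _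
    rw [ZMod.val_add, ← pow_eq_pow_mod _ h, pow_add]

@[simp] lemma zmodHom_apply (n : ℕ) [NeZero n] {G : Type*} [Group G] (g : G)
    (h : g ^ n = 1) (x : ZMod n) :
    zmodHom n g h (Multiplicative.ofAdd x) = g ^ x.val := rfl

/-- The image of S in PSL₂(ℤ). -/
def sigma : PSL := QuotientGroup.mk S
/-- The image of B in PSL₂(ℤ). -/
def tau : PSL := QuotientGroup.mk Bmat

lemma sigma_sq : sigma ^ 2 = 1 := by
  rw [sigma, ← QuotientGroup.mk_pow, S_sq, QuotientGroup.eq_one_iff]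
  exact neg_one_mem_center

lemma tau_cube : tau ^ 3 = 1 := by
  rw [tau, ← QuotientGroup.mk_pow, B_cube, QuotientGroup.eq_one_iff]
  exact neg_one_mem_center

/-- The homomorphism from ℤ/2 * ℤ/3 to PSL₂(ℤ). -/
def phi : Monoid.Coprod (Multiplicative (ZMod 2)) (Multiplicative (ZMod 3)) →* PSL :=
  Monoid.Coprod.lift (zmodHom 2 sigma sigma_sq) (zmodHom 3 tau tau_cube)

/-! ### Surjectivity -/

lemma phi_inl (x : ZMod 2) : phi (Monoid.Coprod.inl (Multiplicative.ofAdd x)) = sigma ^ x.val := by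
  simp [phi]

lemma phi_inr (x : ZMod 3) : phi (Monoid.Coprod.inr (Multiplicative.ofAdd x)) = tau ^ x.val := by
  simp [phi]

lemma phi_surjective : Function.Surjective phi := by
  rw [← MonoidHom.range_eq_top, eq_top_iff]
  have hgen : Subgroup.closure ({sigma, QuotientGroup.mk T} : Set PSL) = ⊤ := by
    have h := congrArg (Subgroup.map (QuotientGroup.mk' (Subgroup.center SL2Z))) closure_ST
    rwa [MonoidHom.map_closure, Subgroup.map_top_of_surjective _
      (QuotientGroup.mk'_surjective _), Set.image_insert_eq, Set.image_singleton] at h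
  rw [← hgen]
  apply Subgroup.closure_le _ |>.mpr
  rintro x (rfl | rfl)
  · refine ⟨Monoid.Coprod.inl (Multiplicative.ofAdd 1), ?_⟩
    rw [phi_inl, ZMod.val_one, pow_one]
  · refine ⟨Monoid.Coprod.inr (Multiplicative.ofAdd 1) ^ 2 *
      Monoid.Coprod.inl (Multiplicative.ofAdd 1), ?_⟩
    rw [_root_.map_mul, map_pow, phi_inl, phi_inr]
    show (tau ^ (1 : ZMod 3).val) ^ 2 * sigma ^ (1 : ZMod 2).val = QuotientGroup.mk T
    rw [ZMod.val_one, ZMod.val_one, pow_one, pow_one]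
    rw [sigma, tau, ← QuotientGroup.mk_pow, ← QuotientGroup.mk_mul, B_sq_mul_S]

/-! ### Analytic ping-pong estimates -/

lemma smul_coe' (A : SL2Z) (z : ℍ) :
    ((A • z : ℍ) : ℂ) = ((A 0 0 : ℝ) * z + (A 0 1 : ℝ)) / ((A 1 0 : ℝ) * z + (A 1 1 : ℝ)) := by
  rw [UpperHalfPlane.specialLinearGroup_apply]
  simp

lemma sigma_smul_re {z : ℍ} (h : 0 < z.re) : (sigma • z).re < 0 := by
  rw [sigma, psl_smul]
  have hc : ((S • z : ℍ) : ℂ) = -1 / z := by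
    rw [smul_coe']
    have h00 : (S : Matrix (Fin 2) (Fin 2) ℤ) 0 0 = 0 := rfl
    have h01 : (S : Matrix (Fin 2) (Fin 2) ℤ) 0 1 = -1 := rfl
    have h10 : (S : Matrix (Fin 2) (Fin 2) ℤ) 1 0 = 1 := rfl
    have h11 : (S : Matrix (Fin 2) (Fin 2) ℤ) 1 1 = 0 := rfl
    rw [h00, h01, h10, h11]
    push_cast
    ring
  have hre : (S • z).re = (-1 / (z : ℂ)).re := by
    rw [← UpperHalfPlane.coe_re, hc]
  rw [hre, Complex.div_re]
  have hns := UpperHalfPlane.normSq_pos z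
  have hzre : (z : ℂ).re = z.re := UpperHalfPlane.coe_re z
  simp only [Complex.neg_re, Complex.one_re, Complex.neg_im, Complex.one_im, neg_zero,
    zero_mul, zero_div, add_zero, hzre]
  rw [neg_mul, one_mul, neg_div]
  exact neg_lt_zero.mpr (div_pos h hns)

lemma tau_smul_re {z : ℍ} (h : z.re < 0) : 0 < (tau • z).re := by
  rw [tau, psl_smul]
  have hc : ((Bmat • z : ℍ) : ℂ) = 1 / (1 - z) := by
    rw [smul_coe']
    have h00 : (Bmat : Matrix (Fin 2) (Fin 2) ℤ) 0 0 = 0 := rfl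
    have h01 : (Bmat : Matrix (Fin 2) (Fin 2) ℤ) 0 1 = 1 := rfl
    have h10 : (Bmat : Matrix (Fin 2) (Fin 2) ℤ) 1 0 = -1 := rfl
    have h11 : (Bmat : Matrix (Fin 2) (Fin 2) ℤ) 1 1 = 1 := rfl
    rw [h00, h01, h10, h11]
    push_cast
    ring
  have hre : (Bmat • z).re = ((1:ℂ) / (1 - (z:ℂ))).re := by
    rw [← UpperHalfPlane.coe_re, hc]
  have hzne : (1 : ℂ) - (z : ℂ) ≠ 0 := by
    intro h0
    have him : ((1 : ℂ) - (z : ℂ)).im = 0 := by rw [h0]; simp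
    simp only [Complex.sub_im, Complex.one_im, zero_sub, neg_eq_zero] at him
    exact z.im_ne_zero (by rwa [UpperHalfPlane.coe_im] at him)
  have hns : 0 < Complex.normSq (1 - (z:ℂ)) := Complex.normSq_pos.mpr hzne
  rw [hre, Complex.div_re]
  simp only [Complex.one_re, Complex.one_im, Complex.sub_re, Complex.sub_im, zero_mul, zero_div,
    add_zero, one_mul, UpperHalfPlane.coe_re]
  apply div_pos _ hns
  linarith

lemma tau_sq_smul_re {z : ℍ} (h : z.re < 0) : 0 < ((tau ^ 2) • z).re := by
  rw [tau, ← QuotientGroup.mk_pow, psl_smul]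
  have hc : (((Bmat ^ 2) • z : ℍ) : ℂ) = (1 - z) / (-z) := by
    rw [smul_coe']
    have hB2 : ((Bmat ^ 2 : SL2Z) : Matrix (Fin 2) (Fin 2) ℤ) = !![-1, 1; -1, 0] := by
      rw [pow_two, Matrix.SpecialLinearGroup.coe_mul]
      ext i j
      fin_cases i <;> fin_cases j <;> simp [Bmat, Matrix.mul_apply, Fin.sum_univ_two]
    rw [hB2]
    norm_num
    ring
  have hre : ((Bmat ^ 2) • z).re = (((1:ℂ) - z) / (-(z:ℂ))).re := by
    rw [← UpperHalfPlane.coe_re, hc]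
  have hns : 0 < Complex.normSq (-(z:ℂ)) := by
    rw [Complex.normSq_neg]
    exact UpperHalfPlane.normSq_pos z
  rw [hre, Complex.div_re]
  have him := z.im_pos
  apply add_pos
  · apply div_pos _ hns
    simp only [Complex.sub_re, Complex.one_re, Complex.neg_re, UpperHalfPlane.coe_re]
    nlinarith
  · apply div_pos _ hns
    simp only [Complex.sub_im, Complex.one_im, Complex.neg_im, UpperHalfPlane.coe_im, zero_sub]
    nlinarith

/-! ### The binary coproduct as an indexed coproduct -/

/-- The two-element family of groups. -/
def Fam : Bool → Type
  | true => Multiplicative (ZMod 2)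
  | false => Multiplicative (ZMod 3)

instance famGroup : ∀ b, Group (Fam b)
  | true => inferInstanceAs (Group (Multiplicative (ZMod 2)))
  | false => inferInstanceAs (Group (Multiplicative (ZMod 3)))

/-- The family of homomorphisms into PSL₂(ℤ). -/
def famHom : ∀ b, Fam b →* PSL
  | true => zmodHom 2 sigma sigma_sq
  | false => zmodHom 3 tau tau_cube

/-- Binary coproduct vs indexed coproduct over `Bool`. -/
noncomputable def coprodEquiv :
    Monoid.Coprod (Multiplicative (ZMod 2)) (Multiplicative (ZMod 3)) ≃* Monoid.CoprodI Fam :=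
  MonoidHom.toMulEquiv
    (Monoid.Coprod.lift (Monoid.CoprodI.of (M := Fam) (i := true))
      (Monoid.CoprodI.of (M := Fam) (i := false)))
    (Monoid.CoprodI.lift (fun b => match b with
      | true => (Monoid.Coprod.inl : Multiplicative (ZMod 2) →* _)
      | false => (Monoid.Coprod.inr : Multiplicative (ZMod 3) →* _)))
    (by
      apply Monoid.Coprod.hom_ext <;> ext x <;> rfl)
    (by
      apply Monoid.CoprodI.ext_hom
      intro b
      cases b <;> ext x <;> rfl)

lemma phi_eq : phi = (Monoid.CoprodI.lift famHom).comp coprodEquiv.toMonoidHom := by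
  apply Monoid.Coprod.hom_ext <;> ext x <;> rfl

/-! ### Injectivity via ping-pong -/

/-- The ping-pong sets: left half-plane for ℤ/2, right half-plane for ℤ/3. -/
def XX : Bool → Set ℍ
  | true => {z : ℍ | z.re < 0}
  | false => {z : ℍ | 0 < z.re}

lemma pp_injective : Function.Injective (Monoid.CoprodI.lift famHom) := by
  apply Monoid.CoprodI.lift_injective_of_ping_pong famHom _ XX
  · -- nonempty
    intro b
    cases b
    · exact ⟨⟨⟨1, 1⟩, by norm_num⟩, by show (0:ℝ) < _; norm_num [UpperHalfPlane.re]⟩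
    · exact ⟨⟨⟨-1, 1⟩, by norm_num⟩, by show _ < (0:ℝ); norm_num [UpperHalfPlane.re]⟩
  · -- disjoint
    intro i j hij
    cases i <;> cases j <;> try exact absurd rfl hij
    all_goals
      rw [Function.onFun, Set.disjoint_left]
      intro z hz1 hz2
      simp only [XX, Set.mem_setOf_eq] at hz1 hz2
      linarith
  · -- ping-pong condition
    intro i j hij
    cases i <;> cases j <;> try exact absurd rfl hij
    · -- i = false (ℤ/3), j = true (ℤ/2)
      intro h hne
      rw [Set.smul_set_subset_iff]
      intro z hz
      have hz' : z.re < 0 := hz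
      have hcases : ∀ x : Multiplicative (ZMod 3),
          x = 1 ∨ x = Multiplicative.ofAdd 1 ∨ x = Multiplicative.ofAdd 2 := by decide
      rcases hcases h with h0 | h1 | h2
      · exact absurd h0 hne
      · have he : famHom false h = tau := by
          rw [h1]
          show tau ^ (1 : ZMod 3).val = tau
          rw [ZMod.val_one, pow_one]
        rw [he]
        exact tau_smul_re hz'
      · have he : famHom false h = tau ^ 2 := by
          rw [h2]
          show tau ^ (2 : ZMod 3).val = tau ^ 2
          congr 1
        rw [he]
        exact tau_sq_smul_re hz'
    · -- i = true (ℤ/2), j = false (ℤ/3)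
      intro h hne
      rw [Set.smul_set_subset_iff]
      intro z hz
      have hz' : 0 < z.re := hz
      have hcases : ∀ x : Multiplicative (ZMod 2),
          x = 1 ∨ x = Multiplicative.ofAdd 1 := by decide
      rcases hcases h with h0 | h1
      · exact absurd h0 hne
      · have he : famHom true h = sigma := by
          rw [h1]
          show sigma ^ (1 : ZMod 2).val = sigma
          rw [ZMod.val_one, pow_one]
        rw [he]
        exact sigma_smul_re hz'
  · -- cardinality
    right
    refine ⟨false, ?_⟩
    have e : Fam false ≃ ZMod 3 := Equiv.refl (ZMod 3)
    have h3 : Cardinal.mk (Fam false) = 3 :=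
      (Cardinal.mk_congr e).trans (by simp [Cardinal.mk_fintype])
    rw [h3]

lemma phi_injective : Function.Injective phi := by
  rw [phi_eq, MonoidHom.coe_comp]
  exact pp_injective.comp coprodEquiv.injective

end PSLFree


/-- PSL₂(ℤ) is isomorphic to the free product ℤ/2 * ℤ/3. -/
theorem psl2z_iso_free_product :
    Nonempty (PSL2Z ≃* Monoid.Coprod (Multiplicative (ZMod 2)) (Multiplicative (ZMod 3))) := by
  exact ⟨(MulEquiv.ofBijective PSLFree.phi
    ⟨PSLFree.phi_injective, PSLFree.phi_surjective⟩).symm⟩
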